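/- Let A₁, A₂ be closed subsets of K^n. Then there exists a set U₁ ⊆ K^n which is clopen in K^n \ (A₁ ∩ A₂), contains A₁ \ A₂, and is disjoint from A₂ (and symmetrically U₂ = (K^n \ (A₁∩A₂)) \ U₁ is clopen in K^n \ (A₁∩A₂), contains A₂\A₁, and is disjoint from A₁). -/

import Mathlib

open EMetric Metric Set

/-- The strong triangle inequality for `edist` in a single ultrametric space. -/
lemma ultra_edist_triangle_max {X : Type*} [PseudoMetricSpace X] [IsUltrametricDist X]
    (x y z : X) : edist x z ≤ max (edist x y) (edist y z) := by
  have hmono : Monotone ENNReal.ofReal := fun _ _ h => ENNReal.ofReal_le_ofReal h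
  rw [edist_dist, edist_dist, edist_dist, ← hmono.map_max]
  exact ENNReal.ofReal_le_ofReal (IsUltrametricDist.dist_triangle_max x y z)

/-- The strong triangle inequality for `edist` in `Fin n → K`. -/
lemma pi_edist_triangle_max {K : Type*} [NormedField K] [IsUltrametricDist K] {n : ℕ}
    (x y z : Fin n → K) : edist x z ≤ max (edist x y) (edist y z) := by
  rw [edist_pi_def, edist_pi_def, edist_pi_def]
  refine Finset.sup_le fun i hi => ?_
  calc edist (x i) (z i) ≤ max (edist (x i) (y i)) (edist (y i) (z i)) :=
        ultra_edist_triangle_max _ _ _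
    _ ≤ _ := max_le_max (Finset.le_sup (f := fun i => edist (x i) (y i)) hi)
        (Finset.le_sup (f := fun i => edist (y i) (z i)) hi)

/-- Key ultrametric fact: if `edist x y < infEdist y s` then `infEdist x s < infEdist y s`
is impossible. -/
lemma ultra_infEdist_aux {K : Type*} [NormedField K] [IsUltrametricDist K] {n : ℕ}
    {s : Set (Fin n → K)} {x y : Fin n → K}
    (hx : infEdist x s < infEdist y s) (hxy : edist x y < infEdist y s) : False := by
  obtain ⟨a, ha, hxa⟩ := infEdist_lt_iff.mp (hx.trans_le le_rfl)
  have h1 : infEdist y s ≤ edist y a := infEdist_le_edist_of_mem ha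
  have h2 : edist y a ≤ max (edist y x) (edist x a) := pi_edist_triangle_max y x a
  rw [edist_comm y x] at h2
  exact absurd ((h1.trans h2).trans_lt (max_lt hxy hxa)) (lt_irrefl _)

/-- For closed `A₁, A₂ ⊆ K^n` there is a set `U₁` which is clopen in
`K^n \ (A₁ ∩ A₂)`, contains `A₁ \ A₂` and is disjoint from `A₂`; symmetrically its
complement `U₂` in `K^n \ (A₁ ∩ A₂)` is clopen there, contains `A₂ \ A₁` and is
disjoint from `A₁`. -/
theorem exists_relatively_clopen_separating {K : Type*} [NormedField K]
    [IsUltrametricDist K] {n : ℕ} (A₁ A₂ : Set (Fin n → K))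
    (h₁ : IsClosed A₁) (h₂ : IsClosed A₂) :
    ∃ U₁ : Set (Fin n → K), U₁ ⊆ (A₁ ∩ A₂)ᶜ ∧
      IsClopen {x : ((A₁ ∩ A₂)ᶜ : Set (Fin n → K)) | (x : Fin n → K) ∈ U₁} ∧
      A₁ \ A₂ ⊆ U₁ ∧ Disjoint U₁ A₂ ∧
      IsClopen {x : ((A₁ ∩ A₂)ᶜ : Set (Fin n → K)) | (x : Fin n → K) ∈ (A₁ ∩ A₂)ᶜ \ U₁} ∧
      A₂ \ A₁ ⊆ (A₁ ∩ A₂)ᶜ \ U₁ ∧ Disjoint ((A₁ ∩ A₂)ᶜ \ U₁) A₁ := by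
  classical
  set S : Set (Fin n → K) := (A₁ ∩ A₂)ᶜ with hS
  set U₁ : Set (Fin n → K) :=
    {x | x ∈ S ∧ infEdist x A₁ ≤ infEdist x A₂} with hU₁
  set V : Set (Fin n → K) :=
    {x | x ∈ S ∧ infEdist x A₂ < infEdist x A₁} with hV
  -- U₁ is open in the ambient space
  have hUopen : IsOpen U₁ := by
    rw [EMetric.isOpen_iff]
    rintro x ⟨hxS, hle⟩
    have hd2pos : 0 < infEdist x A₂ := by
      rcases eq_or_lt_of_le (zero_le : 0 ≤ infEdist x A₂) with h | h
      · exfalso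
        have hx2 : x ∈ A₂ := (mem_iff_infEdist_zero_of_closed h₂).mpr h.symm
        have hx1 : x ∈ A₁ := by
          refine (mem_iff_infEdist_zero_of_closed h₁).mpr (le_antisymm ?_ zero_le)
          rw [h]; exact hle
        exact hxS ⟨hx1, hx2⟩
      · exact h
    refine ⟨infEdist x A₂, hd2pos, fun y hy => ?_⟩
    rw [EMetric.mem_ball, edist_comm] at hy
    -- infEdist y A₂ = infEdist x A₂
    have hyA₂ : infEdist y A₂ = infEdist x A₂ := by
      rcases lt_trichotomy (infEdist y A₂) (infEdist x A₂) with h | h | h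
      · exact absurd (ultra_infEdist_aux h (by rwa [edist_comm])) not_false
      · exact h
      · exact absurd (ultra_infEdist_aux h (hy.trans h)) not_false
    have hyA₁ : infEdist y A₁ ≤ infEdist x A₂ := by
      by_contra hcon
      push_neg at hcon
      exact ultra_infEdist_aux (lt_of_le_of_lt hle hcon) (hy.trans hcon)
    have hyS : y ∈ S := by
      intro hmem
      have : infEdist y A₂ = 0 := infEdist_zero_of_mem hmem.2
      rw [this] at hyA₂
      exact absurd hyA₂.symm hd2pos.ne'
    exact ⟨hyS, hyA₁.trans_eq hyA₂.symm⟩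
  -- V is open in the ambient space
  have hVopen : IsOpen V := by
    rw [EMetric.isOpen_iff]
    rintro x ⟨hxS, hlt⟩
    have hd1pos : 0 < infEdist x A₁ := zero_le.trans_lt hlt
    refine ⟨infEdist x A₁, hd1pos, fun y hy => ?_⟩
    rw [EMetric.mem_ball, edist_comm] at hy
    have hyA₁ : infEdist y A₁ = infEdist x A₁ := by
      rcases lt_trichotomy (infEdist y A₁) (infEdist x A₁) with h | h | h
      · exact absurd (ultra_infEdist_aux h (by rwa [edist_comm])) not_false
      · exact h
      · exact absurd (ultra_infEdist_aux h (hy.trans h)) not_false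
    have hyA₂ : infEdist y A₂ < infEdist x A₁ := by
      by_contra hcon
      push_neg at hcon
      exact ultra_infEdist_aux (hlt.trans_le hcon) (hy.trans_le hcon)
    have hyS : y ∈ S := by
      intro hmem
      have : infEdist y A₁ = 0 := infEdist_zero_of_mem hmem.1
      rw [this] at hyA₁
      exact absurd hyA₁.symm hd1pos.ne'
    exact ⟨hyS, hyA₂.trans_eq hyA₁.symm⟩
  -- The two subsets of S are complementary
  have hcompl : ∀ x : S, (x : Fin n → K) ∈ U₁ ↔ ¬ ((x : Fin n → K) ∈ V) := by
    rintro ⟨x, hx⟩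
    simp only [hU₁, hV, mem_setOf_eq]
    constructor
    · rintro ⟨_, hle⟩ ⟨_, hlt⟩; exact absurd hle hlt.not_ge
    · intro h
      refine ⟨hx, ?_⟩
      by_contra hcon
      push_neg at hcon
      exact h ⟨hx, hcon⟩
  have hsetU : {x : S | (x : Fin n → K) ∈ U₁} = Subtype.val ⁻¹' U₁ := rfl
  have hsetV : {x : S | (x : Fin n → K) ∈ V} = Subtype.val ⁻¹' V := rfl
  have hUopen' : IsOpen {x : S | (x : Fin n → K) ∈ U₁} := by
    rw [hsetU]; exact hUopen.preimage continuous_subtype_val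
  have hVopen' : IsOpen {x : S | (x : Fin n → K) ∈ V} := by
    rw [hsetV]; exact hVopen.preimage continuous_subtype_val
  have hVeq : {x : S | (x : Fin n → K) ∈ V} = {x : S | (x : Fin n → K) ∈ U₁}ᶜ := by
    ext x
    simp only [mem_setOf_eq, mem_compl_iff]
    rw [hcompl x]
    tauto
  have hUclopen : IsClopen {x : S | (x : Fin n → K) ∈ U₁} := by
    refine ⟨?_, hUopen'⟩
    rw [← isOpen_compl_iff, ← hVeq]
    exact hVopen'
  refine ⟨U₁, fun x hx => hx.1, hUclopen, ?_, ?_, ?_, ?_, ?_⟩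
  · -- A₁ \ A₂ ⊆ U₁
    rintro x ⟨hx1, hx2⟩
    refine ⟨fun hmem => hx2 hmem.2, ?_⟩
    exact (infEdist_zero_of_mem hx1).trans_le zero_le
  · -- Disjoint U₁ A₂
    rw [Set.disjoint_left]
    rintro x ⟨hxS, hle⟩ hx2
    have : infEdist x A₁ = 0 :=
      le_antisymm (by rw [← infEdist_zero_of_mem hx2]; exact hle) zero_le
    exact hxS ⟨(mem_iff_infEdist_zero_of_closed h₁).mpr this, hx2⟩
  · -- clopen complement
    have heq : {x : S | (x : Fin n → K) ∈ S \ U₁} = {x : S | (x : Fin n → K) ∈ U₁}ᶜ := by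
      ext x
      simp only [mem_setOf_eq, mem_diff, mem_compl_iff]
      exact ⟨fun h => h.2, fun h => ⟨x.2, h⟩⟩
    rw [heq]
    exact hUclopen.compl
  · -- A₂ \ A₁ ⊆ S \ U₁
    rintro x ⟨hx2, hx1⟩
    refine ⟨fun hmem => hx1 hmem.1, ?_⟩
    rintro ⟨hxS, hle⟩
    have : infEdist x A₁ = 0 :=
      le_antisymm (by rw [← infEdist_zero_of_mem hx2]; exact hle) zero_le
    exact hx1 ((mem_iff_infEdist_zero_of_closed h₁).mpr this)
  · -- Disjoint (S \ U₁) A₁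
    rw [Set.disjoint_left]
    rintro x ⟨hxS, hxn⟩ hx1
    exact hxn ⟨hxS, (infEdist_zero_of_mem hx1).trans_le zero_le⟩
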